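/- Let c > 0 and let f : ℝ → ℂ be a differentiable function satisfying deriv f x = (c·x)·(f x) for all x ∈ ℝ. If f is square-integrable on ℝ, then f is identically zero. (This shows the operator −∂ₓ + c·x has trivial kernel in L²(ℝ), the other half of the paper's local index computation ind(e₁∂ₓ + λλ_{ij}x·ē₁) = sgn(λ_{ij}).) -/

import Mathlib

open MeasureTheory

/-- For `c > 0`, any square-integrable differentiable solution of `f' x = (c·x)·f x` on `ℝ`
vanishes identically: the operator `-∂ₓ + c·x` has trivial kernel in `L²(ℝ)`. -/
theorem ode_growing_gaussian_L2_trivial (c : ℝ) (hc : 0 < c) (f : ℝ → ℂ)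
    (hf : Differentiable ℝ f)
    (hode : ∀ x : ℝ, deriv f x = ((c : ℂ) * (x : ℂ)) * f x)
    (hL2 : MemLp f 2 volume) :
    ∀ x : ℝ, f x = 0 := by
  set g : ℝ → ℂ := fun x => f x * Complex.exp (-(c * x ^ 2 / 2 : ℝ)) with hg
  have hgderiv : ∀ x : ℝ, HasDerivAt g 0 x := by
    intro x
    have h1 : HasDerivAt f (((c : ℂ) * x) * f x) x := by
      have := (hf x).hasDerivAt
      rwa [hode x] at this
    have h3 : HasDerivAt (fun x : ℝ => -(c * x ^ 2 / 2)) (-(c * x)) x := by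
      have := (((hasDerivAt_pow 2 x).const_mul c).div_const 2).neg
      refine this.congr_deriv ?_
      push_cast
      ring
    have hin : HasDerivAt (fun x : ℝ => ((-(c * x ^ 2 / 2 : ℝ)) : ℂ))
        ((-(c * x : ℝ)) : ℂ) x := by simpa using h3.ofReal_comp
    have h2 := hin.cexp
    have := h1.mul h2
    refine this.congr_deriv ?_
    push_cast
    ring
  have hgconst : ∀ x : ℝ, g x = g 0 := fun x =>
    is_const_of_deriv_eq_zero (fun y => (hgderiv y).differentiableAt)
      (fun y => (hgderiv y).deriv) x 0
  have hfx : ∀ x : ℝ, f x = f 0 * Complex.exp ((c * x ^ 2 / 2 : ℝ)) := by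
    intro x
    have h := hgconst x
    simp only [hg] at h
    norm_num at h
    have h2 := congrArg (· * Complex.exp ((c * x ^ 2 / 2 : ℝ))) h
    simpa [mul_assoc, ← Complex.exp_add] using h2
  have hf0 : f 0 = 0 := by
    by_contra h0
    have hbound : ∀ᵐ x : ℝ, ‖(fun _ : ℝ => f 0) x‖ ≤ ‖f x‖ := by
      refine Filter.Eventually.of_forall fun x => ?_
      simp only
      rw [hfx x, norm_mul]
      have he : ‖Complex.exp ((c * x ^ 2 / 2 : ℝ) : ℂ)‖ = Real.exp (c * x ^ 2 / 2) := by
        rw [Complex.norm_exp]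
        norm_cast
      rw [he]
      nlinarith [norm_nonneg (f 0), Real.one_le_exp (by positivity : (0:ℝ) ≤ c * x ^ 2 / 2)]
    have hconst : MemLp (fun _ : ℝ => f 0) 2 volume :=
      hL2.mono aestronglyMeasurable_const hbound
    rw [memLp_const_iff (by norm_num) (by norm_num)] at hconst
    rcases hconst with h | h
    · exact h0 h
    · rw [Real.volume_univ] at h
      exact (lt_irrefl _ h).elim
  intro x
  rw [hfx x, hf0, zero_mul]
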